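/- Let G be a locally compact, second countable, Hausdorff topological group, let Λ ⊆ G be a closed subset, and let C ⊆ G be compact. Then the set {(x, P) ∈ G × 𝒞(G) : x ∈ C, P ∈ Ω₀(Λ), x⁻¹ ∈ P, xP ∈ Ω₀(Λ)} is a compact subset of G × 𝒞(G). -/

import Mathlib

open Set Filter Topology Pointwise TopologicalSpace

/-- The space `𝒞(G)` of closed subsets of a topological space `G`. -/
structure CFClosed (G : Type*) [TopologicalSpace G] where
  carrier : Set G
  isClosed' : IsClosed carrier

namespace CFClosed

variable {G : Type*} [TopologicalSpace G]

instance : SetLike (CFClosed G) G where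
  coe := CFClosed.carrier
  coe_injective := fun P Q h => by cases P; cases Q; congr

/-- The Chabauty–Fell topology on `𝒞(G)`, generated by the subbasis consisting of
`O_K = {C | C ∩ K = ∅}` for `K` compact and `O_U = {C | C ∩ U ≠ ∅}` for `U` open. -/
instance chabautyFell : TopologicalSpace (CFClosed G) :=
  TopologicalSpace.generateFrom
    ({s | ∃ K : Set G, IsCompact K ∧ s = {C : CFClosed G | (C : Set G) ∩ K = ∅}} ∪
     {s | ∃ U : Set G, IsOpen U ∧ s = {C : CFClosed G | ((C : Set G) ∩ U).Nonempty}})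

end CFClosed

namespace CFAux

variable {G : Type*} [TopologicalSpace G]

abbrev gen (G : Type*) [TopologicalSpace G] : Set (Set (CFClosed G)) :=
  ({s | ∃ K : Set G, IsCompact K ∧ s = {C : CFClosed G | (C : Set G) ∩ K = ∅}} ∪
     {s | ∃ U : Set G, IsOpen U ∧ s = {C : CFClosed G | ((C : Set G) ∩ U).Nonempty}})

lemma isOpen_miss {K : Set G} (hK : IsCompact K) :
    IsOpen {C : CFClosed G | (C : Set G) ∩ K = ∅} :=
  TopologicalSpace.GenerateOpen.basic _ (Or.inl ⟨K, hK, rfl⟩)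

lemma isOpen_hits {U : Set G} (hU : IsOpen U) :
    IsOpen {C : CFClosed G | ((C : Set G) ∩ U).Nonempty} :=
  TopologicalSpace.GenerateOpen.basic _ (Or.inr ⟨U, hU, rfl⟩)

instance : CompactSpace (CFClosed G) := by
  refine ⟨isCompact_iff_ultrafilter_le_nhds.2 fun f _ => ?_⟩
  set Cs : Set G := {x | ∀ U : Set G, IsOpen U → x ∈ U →
      {P : CFClosed G | ((P : Set G) ∩ U).Nonempty} ∈ f} with hCs
  have hCsc : IsClosed Cs := by
    rw [← isOpen_compl_iff, isOpen_iff_forall_mem_open]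
    rintro x hx
    simp only [hCs, mem_compl_iff, mem_setOf_eq, not_forall] at hx
    obtain ⟨U, hU, hxU, hUf⟩ := hx
    exact ⟨U, fun y hy hmem => hUf (hmem U hU hy), hU, hxU⟩
  refine ⟨⟨Cs, hCsc⟩, mem_univ _, ?_⟩
  have : (𝓝 (⟨Cs, hCsc⟩ : CFClosed G)) =
      ⨅ s ∈ {s : Set (CFClosed G) | (⟨Cs, hCsc⟩ : CFClosed G) ∈ s ∧ s ∈ gen G}, 𝓟 s :=
    nhds_generateFrom
  rw [this, le_iInf₂_iff]
  rintro s ⟨hCmem, hs | hs⟩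
  · obtain ⟨K, hK, rfl⟩ := hs
    simp only [le_principal_iff]
    have key : ∀ x ∈ K, ∃ U : Set G, IsOpen U ∧ x ∈ U ∧
        {P : CFClosed G | (P : Set G) ∩ U = ∅} ∈ f := by
      intro x hxK
      have hxC : x ∉ Cs := fun hxC => by
        have : (⟨Cs, hCsc⟩ : CFClosed G) ∉ {C : CFClosed G | (C : Set G) ∩ K = ∅} := by
          intro h
          exact absurd h (by
            simp only [mem_setOf_eq]
            exact fun hemp => (eq_empty_iff_forall_notMem.1 hemp x ⟨hxC, hxK⟩))
        exact this hCmem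
      simp only [hCs, mem_setOf_eq, not_forall] at hxC
      obtain ⟨U, hU, hxU, hUf⟩ := hxC
      refine ⟨U, hU, hxU, ?_⟩
      have := (Ultrafilter.compl_mem_iff_notMem (s := {P : CFClosed G | ((P : Set G) ∩ U).Nonempty})).2 hUf
      convert this using 1
      ext P
      simp [not_nonempty_iff_eq_empty]
    choose! U hUo hxU hUf using key
    obtain ⟨t, ht⟩ := hK.elim_finite_subcover (fun x : K => U x) (fun x => hUo x x.2)
      (fun x hx => mem_iUnion.2 ⟨⟨x, hx⟩, hxU x hx⟩)
    have hinter : (⋂ x ∈ t, {P : CFClosed G | (P : Set G) ∩ U x = ∅}) ∈ f :=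
      (Filter.biInter_mem t.finite_toSet).2 fun x _ => hUf x x.2
    refine mem_of_superset hinter ?_
    intro P hP
    simp only [mem_iInter, mem_setOf_eq] at hP ⊢
    rw [eq_empty_iff_forall_notMem]
    rintro y ⟨hyP, hyK⟩
    obtain ⟨x, hxt, hyU⟩ := mem_iUnion₂.1 (ht hyK)
    exact (eq_empty_iff_forall_notMem.1 (hP x hxt) y) ⟨hyP, hyU⟩
  · obtain ⟨V, hV, rfl⟩ := hs
    simp only [le_principal_iff]
    obtain ⟨x, hxC, hxV⟩ := hCmem
    exact hxC V hV hxV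

end CFAux

namespace CFAux

variable {G : Type*} [TopologicalSpace G]

lemma isClosed_one_mem [One G] : IsClosed {P : CFClosed G | (1 : G) ∈ P} := by
  have : {P : CFClosed G | (1 : G) ∈ P} =
      {P : CFClosed G | (P : Set G) ∩ {1} = ∅}ᶜ := by
    ext P
    simp [eq_empty_iff_forall_notMem]
  rw [this]
  exact (isOpen_miss isCompact_singleton).isClosed_compl

lemma isClosed_mem_rel [LocallyCompactSpace G] :
    IsClosed {p : G × CFClosed G | p.1 ∈ (p.2 : Set G)} := by
  rw [← isOpen_compl_iff, isOpen_iff_forall_mem_open]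
  rintro ⟨x, P⟩ hx
  simp only [mem_compl_iff, mem_setOf_eq] at hx
  obtain ⟨K, hK1, hK2, hK3⟩ := local_compact_nhds
    (P.isClosed'.isOpen_compl.mem_nhds hx)
  refine ⟨interior K ×ˢ {Q : CFClosed G | (Q : Set G) ∩ K = ∅}, ?_, ?_, ?_⟩
  · rintro ⟨y, Q⟩ ⟨hy, hQ⟩ hmem
    exact (eq_empty_iff_forall_notMem.1 hQ y) ⟨hmem, interior_subset hy⟩
  · exact isOpen_interior.prod (isOpen_miss hK3)
  · exact ⟨mem_interior_iff_mem_nhds.2 hK1, eq_empty_iff_forall_notMem.2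
      fun y ⟨hyP, hyK⟩ => hK2 hyK hyP⟩

variable [Group G] [IsTopologicalGroup G]

lemma continuous_smulCF [LocallyCompactSpace G] :
    Continuous (fun p : G × CFClosed G =>
      (⟨p.1 • (p.2 : Set G), p.2.isClosed'.smul p.1⟩ : CFClosed G)) := by
  apply continuous_generateFrom_iff.2
  rintro s (⟨K, hK, rfl⟩ | ⟨U, hU, rfl⟩)
  · -- preimage of O_K
    rw [isOpen_iff_forall_mem_open]
    rintro ⟨x, P⟩ hxP
    simp only [mem_preimage, mem_setOf_eq] at hxP
    -- x • P ∩ K = ∅, i.e. ∀ k ∈ K, x⁻¹ * k ∉ P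
    have hdisj : ∀ k ∈ K, x⁻¹ * k ∈ (P : Set G)ᶜ := by
      intro k hk hmem
      have : k ∈ x • (P : Set G) := by
        refine ⟨x⁻¹ * k, hmem, by simp [smul_eq_mul]⟩
      exact (eq_empty_iff_forall_notMem.1 hxP k) ⟨this, hk⟩
    -- for each k find nbhds
    have key : ∀ k ∈ K, ∃ V W : Set G, IsOpen V ∧ IsOpen W ∧ x ∈ V ∧ k ∈ W ∧
        ∀ y ∈ V, ∀ w ∈ W, y⁻¹ * w ∈ (P : Set G)ᶜ := by
      intro k hk
      have hc : Continuous (fun q : G × G => q.1⁻¹ * q.2) := by continuity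
      have : (fun q : G × G => q.1⁻¹ * q.2) ⁻¹' (P : Set G)ᶜ ∈ 𝓝 (x, k) :=
        hc.continuousAt.preimage_mem_nhds
          (P.isClosed'.isOpen_compl.mem_nhds (hdisj k hk))
      rw [mem_nhds_prod_iff'] at this
      obtain ⟨V, W, hV, hxV, hW, hkW, hVW⟩ := this
      exact ⟨V, W, hV, hW, hxV, hkW, fun y hy w hw => hVW (Set.mk_mem_prod hy hw)⟩
    choose! V W hVo hWo hxV hkW hVW using key
    obtain ⟨t, ht⟩ := hK.elim_finite_subcover (fun k : K => W k) (fun k => hWo k k.2)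
      (fun k hk => mem_iUnion.2 ⟨⟨k, hk⟩, hkW k hk⟩)
    set V₀ : Set G := ⋂ k ∈ t, V k with hV₀
    have hV₀o : IsOpen V₀ := isOpen_biInter_finset (fun k _ => hVo k k.2)
    have hxV₀ : x ∈ V₀ := mem_iInter₂.2 fun k _ => hxV k k.2
    -- compact nbhd N of x inside V₀
    obtain ⟨N, hN1, hN2, hN3⟩ := local_compact_nhds (hV₀o.mem_nhds hxV₀)
    set K' : Set G := (fun q : G × G => q.1⁻¹ * q.2) '' (N ×ˢ K) with hK'
    have hK'c : IsCompact K' := (hN3.prod hK).image (by continuity)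
    have hPK' : (P : Set G) ∩ K' = ∅ := by
      rw [eq_empty_iff_forall_notMem]
      rintro z ⟨hzP, ⟨⟨y, k⟩, ⟨hyN, hkK⟩, rfl⟩⟩
      obtain ⟨k₀, hk₀t, hkW₀⟩ := mem_iUnion₂.1 (ht hkK)
      exact hVW k₀ k₀.2 y (mem_iInter₂.1 (hN2 hyN) k₀ hk₀t) _ hkW₀ hzP
    refine ⟨interior N ×ˢ {Q : CFClosed G | (Q : Set G) ∩ K' = ∅}, ?_, ?_, ?_⟩
    · rintro ⟨y, Q⟩ ⟨hy, hQ⟩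
      simp only [mem_preimage, mem_setOf_eq]
      rw [eq_empty_iff_forall_notMem]
      rintro k ⟨⟨q, hqQ, rfl⟩, hkK⟩
      have : q ∈ K' := ⟨(y, y • q), ⟨interior_subset hy, by simpa [smul_eq_mul] using hkK⟩,
        by simp [smul_eq_mul]⟩
      exact (eq_empty_iff_forall_notMem.1 hQ q) ⟨hqQ, this⟩
    · exact isOpen_interior.prod (isOpen_miss hK'c)
    · exact ⟨mem_interior_iff_mem_nhds.2 hN1, hPK'⟩
  · -- preimage of O_U
    rw [isOpen_iff_forall_mem_open]
    rintro ⟨x, P⟩ hxP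
    simp only [mem_preimage, mem_setOf_eq] at hxP
    obtain ⟨z, ⟨p, hpP, rfl⟩, hzU⟩ := hxP
    have hc : Continuous (fun q : G × G => q.1 * q.2) := continuous_mul
    have : (fun q : G × G => q.1 * q.2) ⁻¹' U ∈ 𝓝 (x, p) :=
      hc.continuousAt.preimage_mem_nhds (hU.mem_nhds (by simpa [smul_eq_mul] using hzU))
    rw [mem_nhds_prod_iff'] at this
    obtain ⟨V, W, hV, hxV, hW, hpW, hVW⟩ := this
    refine ⟨V ×ˢ {Q : CFClosed G | ((Q : Set G) ∩ W).Nonempty}, ?_, ?_, ?_⟩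
    · rintro ⟨y, Q⟩ ⟨hy, ⟨q, hqQ, hqW⟩⟩
      exact ⟨y * q, ⟨q, hqQ, by simp [smul_eq_mul]⟩, hVW (Set.mk_mem_prod hy hqW)⟩
    · exact hV.prod (isOpen_hits hW)
    · exact ⟨hxV, ⟨p, hpP, hpW⟩⟩

end CFAux

section Hulls

variable {G : Type*} [TopologicalSpace G] [Group G]

/-- The hull `Ω(Λ)` of a closed subset `Λ ⊆ G`: the closure in the Chabauty–Fell topology
of the set of left translates of `Λ`. -/
def hull (Λ : CFClosed G) : Set (CFClosed G) :=
  closure {P : CFClosed G | ∃ g : G, (P : Set G) = g • (Λ : Set G)}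

/-- The discrete hull `Ω₀(Λ)`: elements of the hull containing the identity. -/
def discreteHull (Λ : CFClosed G) : Set (CFClosed G) :=
  {P ∈ hull Λ | (1 : G) ∈ P}

/-- Finite local complexity: for every compact `K ⊆ G` there is a finite collection `𝓕` of
finite subsets of `G` such that every `P ∈ Ω₀(Λ)` satisfies `K ∩ P = h • F` for some
`h ∈ G`, `F ∈ 𝓕`. -/
def FLC (Λ : CFClosed G) : Prop :=
  ∀ K : Set G, IsCompact K → ∃ 𝓕 : Set (Set G), 𝓕.Finite ∧ (∀ F ∈ 𝓕, F.Finite) ∧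
    ∀ P ∈ discreteHull Λ, ∃ h : G, ∃ F ∈ 𝓕, K ∩ (P : Set G) = h • F

end Hulls

lemma isClosed_discreteHull' {G : Type*} [TopologicalSpace G] [Group G] (Λ : CFClosed G) :
    IsClosed (discreteHull Λ) := by
  have : discreteHull Λ = hull Λ ∩ {P : CFClosed G | (1 : G) ∈ P} := rfl
  rw [this]
  exact isClosed_closure.inter CFAux.isClosed_one_mem

open Pointwise in
/-- For a compact `C ⊆ G`, the part of the groupoid `𝒢(Λ)` with first coordinate in `C`
is compact in `G × 𝒞(G)`. -/
theorem isCompact_groupoid_fiber (G : Type*) [TopologicalSpace G] [Group G]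
    [IsTopologicalGroup G] [LocallyCompactSpace G] [SecondCountableTopology G] [T2Space G]
    (Λ : CFClosed G) (C : Set G) (hC : IsCompact C) :
    IsCompact {p : G × CFClosed G | p.1 ∈ C ∧ p.2 ∈ discreteHull Λ ∧ p.1⁻¹ ∈ p.2 ∧
      (⟨p.1 • (p.2 : Set G), p.2.isClosed'.smul p.1⟩ : CFClosed G) ∈ discreteHull Λ} := by
  have hdh : IsClosed (discreteHull Λ) := isClosed_discreteHull' Λ
  have h1 : IsClosed {p : G × CFClosed G | p.1 ∈ C} := hC.isClosed.preimage continuous_fst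
  have h2 : IsClosed {p : G × CFClosed G | p.2 ∈ discreteHull Λ} := hdh.preimage continuous_snd
  have h3 : IsClosed {p : G × CFClosed G | p.1⁻¹ ∈ p.2} := by
    have : Continuous (fun p : G × CFClosed G => (p.1⁻¹, p.2)) :=
      (continuous_fst.inv).prodMk continuous_snd
    exact CFAux.isClosed_mem_rel.preimage this
  have h4 : IsClosed {p : G × CFClosed G |
      (⟨p.1 • (p.2 : Set G), p.2.isClosed'.smul p.1⟩ : CFClosed G) ∈ discreteHull Λ} :=
    hdh.preimage CFAux.continuous_smulCF
  have hclosed : IsClosed {p : G × CFClosed G | p.1 ∈ C ∧ p.2 ∈ discreteHull Λ ∧ p.1⁻¹ ∈ p.2 ∧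
      (⟨p.1 • (p.2 : Set G), p.2.isClosed'.smul p.1⟩ : CFClosed G) ∈ discreteHull Λ} := by
    have : {p : G × CFClosed G | p.1 ∈ C ∧ p.2 ∈ discreteHull Λ ∧ p.1⁻¹ ∈ p.2 ∧
        (⟨p.1 • (p.2 : Set G), p.2.isClosed'.smul p.1⟩ : CFClosed G) ∈ discreteHull Λ} =
        {p : G × CFClosed G | p.1 ∈ C} ∩ ({p | p.2 ∈ discreteHull Λ} ∩
          ({p | p.1⁻¹ ∈ p.2} ∩ {p |
            (⟨p.1 • (p.2 : Set G), p.2.isClosed'.smul p.1⟩ : CFClosed G) ∈ discreteHull Λ})) := by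
      ext p; simp [and_assoc]
    rw [this]
    exact h1.inter (h2.inter (h3.inter h4))
  exact (hC.prod isCompact_univ).of_isClosed_subset hclosed fun p hp => ⟨hp.1, mem_univ _⟩
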